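/- For any piecewise syndetic set A ⊆ ℕ there exists a syndetic set L ⊆ ℕ such that for every finite non-empty F ⊆ L, the intersection ⋂_{m ∈ F} (A − m) is piecewise syndetic. (Intersectivity lemma for piecewise syndetic sets.) -/

import Mathlib

/-- `S` is syndetic if finitely many shifts of `S` cover `ℕ`. -/
def Syndetic (S : Set ℕ) : Prop := ∃ h : ℕ, ∀ n : ℕ, ∃ t ≤ h, n + t ∈ S

/-- `T` is thick if it contains arbitrarily long runs of consecutive integers. -/
def Thick (T : Set ℕ) : Prop := ∀ h : ℕ, ∃ n : ℕ, ∀ t ≤ h, n + t ∈ T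

/-- `A` is piecewise syndetic if it is the intersection of a syndetic and a thick set. -/
def PiecewiseSyndetic (A : Set ℕ) : Prop :=
  ∃ S T : Set ℕ, Syndetic S ∧ Thick T ∧ A = S ∩ T

open Filter Set

attribute [local instance] Ultrafilter.add Ultrafilter.addSemigroup

namespace PWSAux

/-- A convenient equivalent of piecewise syndeticity. -/
def PWS (A : Set ℕ) : Prop := ∃ h : ℕ, ∀ N : ℕ, ∃ n : ℕ, ∀ t ≤ N, ∃ s ≤ h, n + t + s ∈ A

theorem pws_of_piecewise {A : Set ℕ} (hA : PiecewiseSyndetic A) : PWS A := by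
  obtain ⟨S, T, ⟨h, hS⟩, hT, rfl⟩ := hA
  refine ⟨h, fun N => ?_⟩
  obtain ⟨n, hn⟩ := hT (N + h)
  refine ⟨n, fun t ht => ?_⟩
  obtain ⟨s, hs, hsS⟩ := hS (n + t)
  refine ⟨s, hs, ?_, ?_⟩
  · exact hsS
  · have := hn (t + s) (by omega)
    rwa [← add_assoc] at this

theorem piecewise_of_pws {A : Set ℕ} (hA : PWS A) : PiecewiseSyndetic A := by
  obtain ⟨h, hP⟩ := hA
  choose f hf using hP
  classical
  set T : Set ℕ := A ∪ {x | ∃ N t, t ≤ N ∧ x = f N + t} with hTdef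
  refine ⟨A ∪ Tᶜ, T, ⟨h, fun n => ?_⟩, fun h' => ?_, ?_⟩
  · by_cases hnA : n ∈ A
    · exact ⟨0, Nat.zero_le _, Or.inl (by simpa using hnA)⟩
    by_cases hnT : n ∈ T
    · rcases hnT with hnA' | ⟨N, t, ht, rfl⟩
      · exact absurd hnA' hnA
      · obtain ⟨s, hs, hsA⟩ := hf N t ht
        exact ⟨s, hs, Or.inl hsA⟩
    · exact ⟨0, Nat.zero_le _, Or.inr (by simpa using hnT)⟩
  · exact ⟨f h', fun t ht => Or.inr ⟨h', t, ht, rfl⟩⟩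
  · ext x
    constructor
    · intro hx
      exact ⟨Or.inl hx, Or.inl hx⟩
    · rintro ⟨hxS, hxT⟩
      rcases hxS with hxA | hxTc
      · exact hxA
      · exact absurd hxT hxTc

local notation "βN" => Ultrafilter ℕ

theorem mem_add_iff {B : Set ℕ} {p q : βN} :
    B ∈ p + q ↔ {m | {n | m + n ∈ B} ∈ q} ∈ p := by
  have h := Ultrafilter.eventually_add p q (· ∈ B)
  simpa only [Filter.eventually_iff, Ultrafilter.mem_coe, Set.setOf_mem_eq] using h

/-- A thick set gives an ultrafilter all of whose shifts contain the set. -/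
theorem thick_ultrafilter {B : Set ℕ} (hB : ∀ h : ℕ, ∃ n, ∀ t ≤ h, n + t ∈ B) :
    ∃ q : βN, ∀ m : ℕ, {n | m + n ∈ B} ∈ q := by
  have hfip : ∀ T : Finset (Set ℕ),
      (↑T : Set (Set ℕ)) ⊆ Set.range (fun m : ℕ => {n | m + n ∈ B}) →
      (⋂₀ (↑T : Set (Set ℕ))).Nonempty := by
    intro T hT
    have h1 : ∀ S : {S // S ∈ T}, ∃ m : ℕ, {n | m + n ∈ B} = S.1 := fun S => hT S.2
    choose g hg using h1
    classical
    set b := Finset.univ.sup g with hb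
    obtain ⟨n, hn⟩ := hB b
    refine ⟨n, fun S hS => ?_⟩
    have hgb : g ⟨S, hS⟩ ≤ b := Finset.le_sup (Finset.mem_univ _)
    have h3 := hn (g ⟨S, hS⟩) hgb
    have h2 : {x | g ⟨S, hS⟩ + x ∈ B} = S := hg ⟨S, hS⟩
    rw [← h2]
    simpa [add_comm] using h3
  obtain ⟨q, hq⟩ := Ultrafilter.exists_ultrafilter_of_finite_inter_nonempty
    (Set.range (fun m : ℕ => {n | m + n ∈ B})) hfip
  exact ⟨q, fun m => hq (Set.mem_range_self m)⟩

/-- Nonempty closed left ideal of `βℕ`. -/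
def GoodSet (C : Set βN) : Prop :=
  C.Nonempty ∧ IsClosed C ∧ ∀ p q : βN, q ∈ C → p + q ∈ C

theorem range_add_good (q : βN) : GoodSet (Set.range (· + q)) := by
  refine ⟨⟨q + q, Set.mem_range_self q⟩,
    (isCompact_range (Ultrafilter.continuous_add_left q)).isClosed, ?_⟩
  rintro p r ⟨p', rfl⟩
  exact ⟨p + p', by show p + p' + q = p + (p' + q); rw [add_assoc]⟩

theorem exists_minimal (C₀ : Set βN) (h₀ : GoodSet C₀) :
    ∃ M : Set βN, GoodSet M ∧ M ⊆ C₀ ∧ ∀ C, GoodSet C → C ⊆ M → C = M := by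
  set S : Set (Set βN) := {C | GoodSet C ∧ C ⊆ C₀} with hS
  have hchains : ∀ c ⊆ S, IsChain (· ⊆ ·) c → c.Nonempty →
      ∃ lb ∈ S, ∀ s ∈ c, lb ⊆ s := by
    intro c hcS hchain hcne
    haveI : Nonempty c := hcne.to_subtype
    have hne : ∀ i : c, (i.1 : Set βN).Nonempty := fun i => (hcS i.2).1.1
    have hcl : ∀ i : c, IsClosed (i.1 : Set βN) := fun i => (hcS i.2).1.2.1
    have hdir : Directed (· ⊇ ·) (fun i : c => (i.1 : Set βN)) := by
      intro i j
      rcases eq_or_ne i.1 j.1 with h | h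
      · exact ⟨i, subset_rfl, h.le⟩
      · rcases hchain i.2 j.2 h with h' | h'
        · exact ⟨i, subset_rfl, h'⟩
        · exact ⟨j, h', subset_rfl⟩
    have hint : (⋂ i : c, (i.1 : Set βN)).Nonempty :=
      IsCompact.nonempty_iInter_of_directed_nonempty_isCompact_isClosed _ hdir hne
        (fun i => (hcl i).isCompact) hcl
    obtain ⟨i₀⟩ := ‹Nonempty c›
    refine ⟨⋂ i : c, (i.1 : Set βN), ⟨⟨hint, isClosed_iInter hcl, ?_⟩, ?_⟩, ?_⟩
    · intro p q hq
      exact Set.mem_iInter.2 fun i => (hcS i.2).1.2.2 p q (Set.mem_iInter.1 hq i)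
    · exact (Set.iInter_subset _ i₀).trans (hcS i₀.2).2
    · exact fun s hs => Set.iInter_subset (fun i : c => (i.1 : Set βN)) ⟨s, hs⟩
  obtain ⟨M, _, hmin⟩ := zorn_superset_nonempty S hchains C₀ ⟨h₀, subset_rfl⟩
  refine ⟨M, hmin.prop.1, hmin.prop.2, fun C hC hCM => ?_⟩
  exact subset_antisymm hCM (hmin.2 ⟨hC, hCM.trans hmin.prop.2⟩ hCM)

theorem syndetic_of_minimal {M : Set βN} (hM : GoodSet M)
    (hmin : ∀ C, GoodSet C → C ⊆ M → C = M) {u : βN} (hu : u ∈ M) {B : Set ℕ} (hB : B ∈ u) :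
    Syndetic {m | {n | m + n ∈ B} ∈ u} := by
  set L := {m | {n | m + n ∈ B} ∈ u} with hL
  by_contra hLs
  rw [Syndetic] at hLs
  push_neg at hLs
  obtain ⟨q, hq⟩ := thick_ultrafilter (B := Lᶜ) (fun h => by
    obtain ⟨n, hn⟩ := hLs h
    exact ⟨n, fun t ht => hn t ht⟩)
  have hv : q + u ∈ M := hM.2.2 q u hu
  have hrange : Set.range (· + (q + u)) = M := by
    refine hmin _ (range_add_good _) ?_
    rintro r ⟨p, rfl⟩
    exact hM.2.2 p _ hv
  obtain ⟨w, hw⟩ : u ∈ Set.range (· + (q + u)) := hrange ▸ hu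
  have hw' : w + (q + u) = u := hw
  have hBu : B ∈ (w + q) + u := by rw [add_assoc, hw']; exact hB
  have hLwq : L ∈ w + q := mem_add_iff.1 hBu
  have hwmem : {a | {c | a + c ∈ L} ∈ q} ∈ w := mem_add_iff.1 hLwq
  obtain ⟨a, ha⟩ := Ultrafilter.nonempty_of_mem hwmem
  have ha' : {c | a + c ∈ Lᶜ} ∈ q := hq a
  have : ({c | a + c ∈ L} ∩ {c | a + c ∈ Lᶜ} : Set ℕ) ∈ q := Filter.inter_mem ha ha'
  obtain ⟨c, hc1, hc2⟩ := Ultrafilter.nonempty_of_mem this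
  exact hc2 hc1

theorem pws_of_mem_minimal {M : Set βN} (hM : GoodSet M)
    (hmin : ∀ C, GoodSet C → C ⊆ M → C = M) {u : βN} (hu : u ∈ M) {B : Set ℕ} (hB : B ∈ u) :
    PWS B := by
  obtain ⟨h, hsyn⟩ := syndetic_of_minimal hM hmin hu hB
  refine ⟨h, fun N => ?_⟩
  have hmem : (⋂ t ∈ Finset.range (N + 1), ⋃ s ∈ Finset.range (h + 1),
      {n | t + s + n ∈ B}) ∈ u := by
    rw [← Ultrafilter.mem_coe, Filter.biInter_finset_mem]
    intro t _
    obtain ⟨s, hs, hsL⟩ := hsyn t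
    refine Filter.mem_of_superset (Ultrafilter.mem_coe.2 hsL) ?_
    intro n hn
    exact Set.mem_biUnion (Finset.mem_range.2 (Nat.lt_succ_of_le hs)) hn
  obtain ⟨n, hn⟩ := Ultrafilter.nonempty_of_mem hmem
  refine ⟨n, fun t ht => ?_⟩
  have := Set.mem_iInter₂.1 hn t (Finset.mem_range.2 (Nat.lt_succ_of_le ht))
  obtain ⟨s, hs, hsn⟩ := Set.mem_iUnion₂.1 this
  refine ⟨s, Nat.lt_succ_iff.1 (Finset.mem_range.1 hs), ?_⟩
  have : t + s + n ∈ B := hsn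
  rwa [show n + t + s = t + s + n by omega]

theorem exists_minimal_ultrafilter {A : Set ℕ} (hA : PiecewiseSyndetic A) :
    ∃ M : Set βN, GoodSet M ∧ (∀ C, GoodSet C → C ⊆ M → C = M) ∧ ∃ u ∈ M, A ∈ u := by
  obtain ⟨h, hP⟩ := pws_of_piecewise hA
  set B : Set ℕ := {x | ∃ s ≤ h, x + s ∈ A} with hBdef
  have hBthick : ∀ h' : ℕ, ∃ n, ∀ t ≤ h', n + t ∈ B := fun h' =>
    (hP h').imp fun n hn t ht => hn t ht
  obtain ⟨q, hq⟩ := thick_ultrafilter hBthick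
  obtain ⟨M, hM, hMsub, hmin⟩ := exists_minimal (Set.range (· + q)) (range_add_good q)
  obtain ⟨r, hr⟩ := hM.1
  have hBr : B ∈ r := by
    obtain ⟨p, hp⟩ := hMsub hr
    have hp' : p + q = r := hp
    rw [← hp', mem_add_iff]
    have : {m | {n | m + n ∈ B} ∈ q} = Set.univ := Set.eq_univ_of_forall hq
    rw [this]
    exact Filter.univ_mem
  have hBr' : (⋃ s ∈ (Finset.range (h + 1) : Finset ℕ), {x | x + s ∈ A}) ∈ r := by
    convert hBr using 1
    ext x
    simp [hBdef, Nat.lt_succ_iff]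
  obtain ⟨s, hs, hsr⟩ :=
    (Ultrafilter.finite_biUnion_mem_iff (Finset.range (h + 1)).finite_toSet).1
      (by simpa using hBr')
  refine ⟨M, hM, hmin, pure s + r, hM.2.2 _ _ hr, ?_⟩
  rw [mem_add_iff, Ultrafilter.mem_pure]
  have : {n | s + n ∈ A} = {x | x + s ∈ A} := by ext n; simp [add_comm]
  rw [Set.mem_setOf_eq, this]
  exact hsr

end PWSAux

/-- Intersectivity lemma for piecewise syndetic sets: for any piecewise syndetic `A ⊆ ℕ`
there is a syndetic `L ⊆ ℕ` such that for every finite non-empty `F ⊆ L`, the set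
`⋂ m ∈ F, (A - m)` is piecewise syndetic. -/
theorem intersectivity_piecewiseSyndetic (A : Set ℕ) (hA : PiecewiseSyndetic A) :
    ∃ L : Set ℕ, Syndetic L ∧ ∀ F : Finset ℕ, F.Nonempty → (F : Set ℕ) ⊆ L →
      PiecewiseSyndetic (⋂ m ∈ F, {n : ℕ | n + m ∈ A}) := by
  obtain ⟨M, hM, hmin, u, huM, hAu⟩ := PWSAux.exists_minimal_ultrafilter hA
  have hset : ∀ m : ℕ, {n | n + m ∈ A} = {n | m + n ∈ A} := fun m => by
    ext n; simp [add_comm]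
  refine ⟨{m | {n | n + m ∈ A} ∈ u}, ?_, ?_⟩
  · have hs := PWSAux.syndetic_of_minimal hM hmin huM hAu
    have : {m | {n | n + m ∈ A} ∈ u} = {m | {n | m + n ∈ A} ∈ u} := by
      ext m; rw [Set.mem_setOf_eq, Set.mem_setOf_eq, hset m]
    rw [this]
    exact hs
  · intro F hFne hFL
    have hmem : (⋂ m ∈ F, {n : ℕ | n + m ∈ A}) ∈ u := by
      rw [← Ultrafilter.mem_coe, Filter.biInter_finset_mem]
      exact fun m hm => Ultrafilter.mem_coe.2 (hFL hm)
    exact PWSAux.piecewise_of_pws (PWSAux.pws_of_mem_minimal hM hmin huM hmem)
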